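/- If f ∈ T_n has threshold t and period p, then p is the order of some permutation in S_{n-t}. -/

import Mathlib

/-- `t` and `p` are the threshold and period of `x`: the least values with `p > 0`
and `x ^ (t + p) = x ^ t`. -/
def IsThresholdPeriod {M : Type*} [Monoid M] (x : M) (t p : ℕ) : Prop :=
  0 < p ∧ x ^ (t + p) = x ^ t ∧
    (∀ t' p' : ℕ, 0 < p' → x ^ (t' + p') = x ^ t' → t ≤ t') ∧
    (∀ p' : ℕ, 0 < p' → x ^ (t + p') = x ^ t → p ≤ p')

open Function Set

section Aux

variable {n : ℕ} (f : Fin n → Fin n)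

lemma range_iter_succ_subset (k : ℕ) : range f^[k + 1] ⊆ range f^[k] := by
  rintro y ⟨a, rfl⟩
  exact ⟨f a, (Function.iterate_succ_apply f k a).symm⟩

lemma mapsTo_iter (k : ℕ) : MapsTo f (range f^[k]) (range f^[k]) := by
  rintro x ⟨a, rfl⟩
  exact range_iter_succ_subset f k ⟨a, Function.iterate_succ_apply' f k a⟩

lemma restrict_surj (k : ℕ) (heq : range f^[k + 1] = range f^[k]) :
    Surjective ((mapsTo_iter f k).restrict f _ _) := by
  rintro ⟨y, hy⟩
  rw [← heq] at hy
  obtain ⟨a, rfl⟩ := hy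
  refine ⟨⟨f^[k] a, ⟨a, rfl⟩⟩, ?_⟩
  exact Subtype.ext (Function.iterate_succ_apply' f k a).symm

/-- The permutation of `range f^[k]` induced by `f`, when the range stabilizes. -/
noncomputable def restrictPerm (k : ℕ) (heq : range f^[k + 1] = range f^[k]) :
    Equiv.Perm (range f^[k]) :=
  Equiv.ofBijective _ (restrict_surj f k heq).bijective_of_finite

lemma restrictPerm_pow_apply (k : ℕ) (heq : range f^[k + 1] = range f^[k]) (m : ℕ)
    (x : range f^[k]) :
    ((restrictPerm f k heq ^ m) x : Fin n) = f^[m] x := by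
  induction m with
  | zero => simp
  | succ m ih =>
    rw [pow_succ', Equiv.Perm.mul_apply]
    have : ((restrictPerm f k heq) ((restrictPerm f k heq ^ m) x) : Fin n)
        = f (((restrictPerm f k heq ^ m) x : Fin n)) := rfl
    rw [this, ih, ← Function.iterate_succ_apply' f m (x : Fin n)]

lemma iter_fixed_of_pow_eq_one (k : ℕ) (heq : range f^[k + 1] = range f^[k]) (m : ℕ)
    (hm : restrictPerm f k heq ^ m = 1) :
    f^[k + m] = f^[k] := by
  funext a
  have hx : f^[k] a ∈ range f^[k] := ⟨a, rfl⟩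
  have h1 := restrictPerm_pow_apply f k heq m ⟨f^[k] a, hx⟩
  rw [hm] at h1
  rw [add_comm, Function.iterate_add_apply]
  exact h1.symm

lemma iter_orderOf_eq (k : ℕ) (heq : range f^[k + 1] = range f^[k]) :
    f^[k + orderOf (restrictPerm f k heq)] = f^[k] :=
  iter_fixed_of_pow_eq_one f k heq _ (pow_orderOf_eq_one _)

lemma ncard_range_iter_le (t : ℕ) (ht : ∀ k < t, range f^[k + 1] ≠ range f^[k]) :
    (range f^[t]).ncard ≤ n - t := by
  induction t with
  | zero => simp [Set.ncard_univ, Nat.card_eq_fintype_card]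
  | succ t ih =>
    have h1 : (range f^[t + 1]).ncard < (range f^[t]).ncard := by
      have hsub := range_iter_succ_subset f t
      rcases lt_or_eq_of_le (Set.ncard_le_ncard hsub (toFinite _)) with h | h
      · exact h
      · exact absurd (Set.eq_of_subset_of_ncard_le hsub h.ge (toFinite _))
          (ht t (Nat.lt_succ_self t))
    have h2 := ih fun k hk => ht k (hk.trans (Nat.lt_succ_self t))
    omega

lemma end_pow_eq_iterate (g : Function.End (Fin n)) (m : ℕ) :
    (g ^ m : Function.End (Fin n)) = (g : Fin n → Fin n)^[m] := by
  induction m with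
  | zero => rfl
  | succ m ih =>
    rw [pow_succ, Function.End.mul_def, ih]
    exact (Function.iterate_succ (g : Fin n → Fin n) m).symm

end Aux

theorem period_is_order_of_perm (n t p : ℕ) (f : Function.End (Fin n))
    (h : IsThresholdPeriod f t p) :
    ∃ g : Equiv.Perm (Fin (n - t)), orderOf g = p := by
  classical
  obtain ⟨hp, hfp, hmint, hminp⟩ := h
  set F : Fin n → Fin n := f with hF
  have hiter : ∀ m : ℕ, (f ^ m : Function.End (Fin n)) = F^[m] := end_pow_eq_iterate f
  have hFp : F^[t + p] = F^[t] := by rw [← hiter, ← hiter, hfp]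
  -- the range stabilizes at t
  have hrange : range F^[t + 1] = range F^[t] := by
    refine Set.Subset.antisymm (range_iter_succ_subset F t) ?_
    rintro y ⟨a, rfl⟩
    rw [← hFp]
    have : t + p = (t + 1) + (p - 1) := by omega
    rw [this, Function.iterate_add_apply]
    exact ⟨F^[p-1] a, rfl⟩
  -- cardinality bound
  have hcard : (range F^[t]).ncard ≤ n - t := by
    refine ncard_range_iter_le F t fun k hk hkeq => ?_
    have hq := iter_orderOf_eq F k hkeq
    set q := orderOf (restrictPerm F k hkeq) with hqdef
    have hqpos : 0 < q := orderOf_pos _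
    have : (f ^ (k + q) : Function.End (Fin n)) = f ^ k := by
      rw [hiter, hiter, hq]
    exact absurd (hmint k q hqpos this) (Nat.not_le.mpr hk)
  -- the restricted permutation has order p
  set e := restrictPerm F t hrange with he
  have hordpos : 0 < orderOf e := orderOf_pos _
  have hordle : orderOf e ≤ p := by
    refine Nat.le_of_dvd hp (orderOf_dvd_of_pow_eq_one ?_)
    refine Equiv.ext fun x => Subtype.ext ?_
    have h1 := restrictPerm_pow_apply F t hrange p x
    rw [h1]
    obtain ⟨a, ha⟩ := x.2
    have : F^[p] (x : Fin n) = F^[t + p] a := by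
      rw [add_comm, Function.iterate_add_apply, ha]
    rw [this, hFp, ha]
    rfl
  have hple : p ≤ orderOf e := by
    refine hminp (orderOf e) hordpos ?_
    rw [hiter, hiter]
    exact iter_orderOf_eq F t hrange
  have horder : orderOf e = p := le_antisymm hordle hple
  -- embed into Perm (Fin (n - t))
  have hfin : Fintype.card (range F^[t]) ≤ Fintype.card (Fin (n - t)) := by
    rw [Fintype.card_fin, ← Nat.card_eq_fintype_card, Nat.card_coe_set_eq]
    exact hcard
  obtain ⟨ι⟩ := Function.Embedding.nonempty_of_card_le hfin
  refine ⟨Equiv.Perm.viaEmbeddingHom ι e, ?_⟩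
  rw [orderOf_injective (Equiv.Perm.viaEmbeddingHom ι)
    (Equiv.Perm.viaEmbeddingHom_injective ι) e, horder]
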